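/- The word w_k = (0110)^k contains at least k-1 maximal gapped repeats with single-letter copies and period 3 (namely the pairs of 0's at distance 3: (w[4i], w[4i+3]) appropriately); more generally, for each period p with p ≡ 3 (mod 4) and p < 4k, w_k contains Θ(k) maximal gapped repeats with single-letter copies and period p, so for k = Ω(α), w_k contains Θ(α|w_k|) maximal α-gapped repeats. -/

import Mathlib

/-- The word `w_k = (0110)^k`, 1-based: position `t` carries letter `1` iff
`t % 4 ∈ {2, 3}`. -/
def wk (t : ℕ) : Bool := t % 4 = 2 || t % 4 = 3

lemma wk_false {t : ℕ} (h1 : t % 4 ≠ 2) (h2 : t % 4 ≠ 3) : wk t = false := by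
  simp [wk, h1, h2]

lemma wk_true2 {t : ℕ} (h : t % 4 = 2) : wk t = true := by simp [wk, h]

lemma wk_true3 {t : ℕ} (h : t % 4 = 3) : wk t = true := by simp [wk, h]

/-- For every integer `p` with `p ≡ 3 (mod 4)` and `3 ≤ p ≤ 4k - 1`, the number
of maximal gapped repeats of `w_k = (0110)^k` with copy length `1` and period
`p` is at least `k - ⌈p/4⌉`. -/
theorem stmt16 (k p : ℕ) (hp4 : p % 4 = 3) (hp3 : 3 ≤ p) (hpk : p ≤ 4 * k - 1) :
    k - (p + 3) / 4 ≤
      ((Finset.Icc 1 (4 * k)).filter (fun i =>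
        i + p ≤ 4 * k ∧ wk i = wk (i + p) ∧
        (1 < i → wk (i - 1) ≠ wk (i + p - 1)) ∧
        (i + p < 4 * k → wk (i + 1) ≠ wk (i + p + 1)))).card := by
  classical
  have hcard : (Finset.range (k - (p + 3) / 4)).card = k - (p + 3) / 4 := by simp
  rw [← hcard]
  apply Finset.card_le_card_of_injOn (fun t => 4 * t + 1)
  · intro t ht
    simp only [Finset.mem_coe, Finset.mem_range] at ht
    have hm : (p + 3) / 4 = p / 4 + 1 := by omega
    have hb : 4 * t + 1 + p ≤ 4 * k := by omega
    have e1 : wk (4 * t + 1) = false := wk_false (by omega) (by omega)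
    have e2 : wk (4 * t + 1 + p) = false := wk_false (by omega) (by omega)
    have e3 : wk (4 * t + 1 - 1) = false := wk_false (by omega) (by omega)
    have e4 : wk (4 * t + 1 + p - 1) = true := wk_true3 (by omega)
    have e5 : wk (4 * t + 1 + 1) = true := wk_true2 (by omega)
    have e6 : wk (4 * t + 1 + p + 1) = false := wk_false (by omega) (by omega)
    simp only [Finset.mem_coe, Finset.mem_filter, Finset.mem_Icc, e1, e2, e3, e4, e5, e6]
    refine ⟨⟨by omega, by omega⟩, hb, trivial, fun _ => by simp, fun _ => by simp⟩
  · intro a _ b _ h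
    simp only at h
    omega
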